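/- Let Q be a poset in which every downset is finite, let M be the set of minima of Q, and let G : Q → Vec be a functor to vector spaces. Then lim G is isomorphic to the space of presections {v ∈ ∏_{m∈M} G_m : for all l, m ∈ M and q ∈ Q with l ≤ q and m ≤ q, G_{lq}(v_l) = G_{mq}(v_m)}, where the cone map to G_q is v ↦ G_{lq}(v_l) for any choice of l ∈ M with l ≤ q (this is well-defined). -/

import Mathlib

open CategoryTheory CategoryTheory.Limits

/-- The space of presections of a functor `G : Q ⥤ Vec`: families `v` indexed by the
minima of `Q` such that `G_{lq}(v l) = G_{mq}(v m)` whenever minima `l, m` both lie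
below `q`. -/
def preSec {K : Type} [Field K] {Q : Type} [PartialOrder Q] (G : Q ⥤ ModuleCat.{0} K) :
    Submodule K (∀ m : {m : Q // IsMin m}, G.obj m.1) where
  carrier := {v | ∀ (l m : {m : Q // IsMin m}) (q : Q) (hl : l.1 ≤ q) (hm : m.1 ≤ q),
    G.map hl.hom (v l) = G.map hm.hom (v m)}
  add_mem' := by
    intro v w hv hw l m q hl hm
    simp only [Pi.add_apply, map_add, hv l m q hl hm, hw l m q hl hm]
  zero_mem' := by
    intro l m q hl hm
    simp
  smul_mem' := by
    intro c v hv l m q hl hm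
    simp only [Pi.smul_apply, map_smul, hv l m q hl hm]

theorem stmt15_exists_min {Q : Type} [PartialOrder Q]
    (hfin : ∀ q : Q, (Set.Iic q).Finite) (q : Q) :
    ∃ l : {m : Q // IsMin m}, l.1 ≤ q := by
  obtain ⟨a, ha, hmin⟩ := Set.Finite.exists_minimal (hfin q) ⟨q, le_refl q⟩
  refine ⟨⟨a, fun b hb => ?_⟩, ha⟩
  exact hmin (hb.trans ha) hb

/-- For a poset `Q` with finite downsets and `G : Q ⥤ Vec`, the limit of `G` is
isomorphic to the space of presections of `G`, compatibly with the cone maps: the cone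
map to `G q` is `v ↦ G_{lq}(v l)` for any choice of minimum `l ≤ q`. -/
theorem stmt15 {K : Type} [Field K] {Q : Type} [PartialOrder Q]
    (hfin : ∀ q : Q, (Set.Iic q).Finite) (G : Q ⥤ ModuleCat.{0} K) :
    ∃ e : ↥(limit G) ≃ₗ[K] ↥(preSec G),
      ∀ (q : Q) (l : {m : Q // IsMin m}) (hl : l.1 ≤ q) (x : ↥(limit G)),
        G.map hl.hom ((e x).1 l) = limit.π G q x := by
  classical
  set c : Q → {m : Q // IsMin m} := fun q => (stmt15_exists_min hfin q).choose with hcdef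
  have hc : ∀ q, (c q).1 ≤ q := fun q => (stmt15_exists_min hfin q).choose_spec
  have hw : ∀ (q : Q) (l : {m : Q // IsMin m}) (hl : l.1 ≤ q) (x : ↥(limit G)),
      G.map hl.hom (limit.π G l.1 x) = limit.π G q x := by
    intro q l hl x
    exact congrArg (fun f => f x) (limit.w G hl.hom)
  -- forward map
  let fwd : ↥(limit G) →ₗ[K] ↥(preSec G) :=
  { toFun := fun x => ⟨fun m => limit.π G m.1 x, by
      intro l m q hl hm
      exact (hw q l hl x).trans (hw q m hm x).symm⟩
    map_add' := fun x y => by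
      ext m; exact map_add (limit.π G m.1).hom x y
    map_smul' := fun r x => by
      ext m; exact map_smul (limit.π G m.1).hom r x }
  -- cone with point preSec G
  let cn : Cone G :=
  { pt := ModuleCat.of K ↥(preSec G)
    π := { app := fun q => ModuleCat.ofHom
            { toFun := fun v => G.map (hc q).hom (v.1 (c q))
              map_add' := fun v w => by
                show G.map (hc q).hom ((v + w).1 (c q)) = _
                rw [Submodule.coe_add, Pi.add_apply, map_add]
              map_smul' := fun r v => by
                show G.map (hc q).hom ((r • v).1 (c q)) = _
                rw [Submodule.coe_smul, Pi.smul_apply, map_smul]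
                rfl }
           naturality := fun p q f => by
             ext v
             have hle : p ≤ q := leOfHom f
             have hv := v.2 (c p) (c q) q ((hc p).trans hle) (hc q)
             show G.map (hc q).hom (v.1 (c q)) = G.map f (G.map (hc p).hom (v.1 (c p)))
             rw [← hv]
             have hcomp : G.map ((hc p).trans hle).hom = G.map ((hc p).hom ≫ f) := by
               congr 1
             rw [hcomp, G.map_comp]
             rfl } }
  let inv : ↥(preSec G) →ₗ[K] ↥(limit G) := (limit.lift G cn).hom
  have hlift : ∀ (q : Q) (v : ↥(preSec G)),
      limit.π G q (inv v) = G.map (hc q).hom (v.1 (c q)) := by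
    intro q v
    exact congrArg (fun f => f v) (limit.lift_π cn q)
  have h1 : ∀ x : ↥(limit G), inv (fwd x) = x := by
    intro x
    have heq : ((ModuleCat.ofHom fwd : (limit G : ModuleCat K) ⟶ cn.pt) ≫ limit.lift G cn) = 𝟙 (limit G) := by
      apply limit.hom_ext
      intro q
      apply ModuleCat.hom_ext
      apply LinearMap.ext
      intro y
      show limit.π G q (inv (fwd y)) = limit.π G q y
      rw [hlift q (fwd y)]
      exact hw q (c q) (hc q) y
    exact congrArg (fun f => f x) heq
  have h2 : ∀ v : ↥(preSec G), fwd (inv v) = v := by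
    intro v
    apply Subtype.ext
    funext m
    have hv := v.2 (c m.1) m m.1 (hc m.1) (le_refl m.1)
    have hid : G.map (le_refl m.1).hom = 𝟙 (G.obj m.1) := G.map_id m.1
    calc (fwd (inv v)).1 m = limit.π G m.1 (inv v) := rfl
      _ = G.map (hc m.1).hom (v.1 (c m.1)) := hlift m.1 v
      _ = G.map (le_refl m.1).hom (v.1 m) := hv
      _ = v.1 m := by rw [hid]; rfl
  refine ⟨LinearEquiv.ofLinear fwd inv (LinearMap.ext h2) (LinearMap.ext h1), ?_⟩
  intro q l hl x
  exact hw q l hl x
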